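/- Let f be an R-closed homeomorphism of a compact metrizable space X. If U is an open set that is a union of orbit closures (a saturated open set) containing a minimal set L, then there exists ε > 0 such that the open ε-neighborhood V of L is contained in U, and the saturation Sat(V) = ⋃_{k ∈ Z} f^k(V) is an open, f-invariant, arcwise connected (if V is arcwise connected and L ⊆ f^k(V) for all k) subset of U. -/

import Mathlib

open Topology Filter Set

/-- The ℤ-orbit of a point under a bijection. -/
def orbitE {X : Type*} (e : Equiv.Perm X) (x : X) : Set X :=
  Set.range fun n : ℤ => (e ^ n) x

/-- A homeomorphism is R-closed if the orbit-closure relation is closed. -/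
def RClosed {X : Type*} [TopologicalSpace X] (f : X ≃ₜ X) : Prop :=
  IsClosed {p : X × X | p.2 ∈ closure (orbitE f.toEquiv p.1)}

/-- A minimal set for a bijection of a topological space. -/
def IsMinimalSet {X : Type*} [TopologicalSpace X] (e : Equiv.Perm X) (M : Set X) : Prop :=
  M.Nonempty ∧ IsClosed M ∧ e '' M = M ∧ ∀ x ∈ M, closure (orbitE e x) = M

lemma contZPow {X : Type*} [TopologicalSpace X] (f : X ≃ₜ X) :
    ∀ k : ℤ, Continuous ⇑(f.toEquiv ^ k) := by
  intro k
  induction k using Int.induction_on with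
  | zero => simpa using continuous_id
  | succ n ih =>
    rw [zpow_add_one]
    exact ih.comp f.continuous
  | pred n ih =>
    rw [zpow_sub_one]
    have : ⇑(f.toEquiv)⁻¹ = ⇑f.symm := rfl
    exact ih.comp (this ▸ f.symm.continuous)

theorem stmt_10 {X : Type*} [MetricSpace X] [CompactSpace X]
    (f : X ≃ₜ X) (hf : RClosed f)
    (U : Set X) (hUopen : IsOpen U)
    (hUsat : ∀ x ∈ U, closure (orbitE f.toEquiv x) ⊆ U)
    (L : Set X) (hL : IsMinimalSet f.toEquiv L) (hLU : L ⊆ U) :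
    ∃ ε > (0 : ℝ), Metric.thickening ε L ⊆ U ∧
      IsOpen (⋃ k : ℤ, (f.toEquiv ^ k) '' Metric.thickening ε L) ∧
      f.toEquiv '' (⋃ k : ℤ, (f.toEquiv ^ k) '' Metric.thickening ε L)
        = ⋃ k : ℤ, (f.toEquiv ^ k) '' Metric.thickening ε L ∧
      (⋃ k : ℤ, (f.toEquiv ^ k) '' Metric.thickening ε L) ⊆ U ∧
      ((IsPathConnected (Metric.thickening ε L) ∧
          ∀ k : ℤ, L ⊆ (f.toEquiv ^ k) '' Metric.thickening ε L) →
        IsPathConnected (⋃ k : ℤ, (f.toEquiv ^ k) '' Metric.thickening ε L)) := by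
  obtain ⟨ε, hε, hVU⟩ :=
    (hL.2.1.isCompact).exists_thickening_subset_open hUopen hLU
  set e := f.toEquiv with he
  set V := Metric.thickening ε L with hV
  refine ⟨ε, hε, hVU, ?_, ?_, ?_, ?_⟩
  · -- openness
    refine isOpen_iUnion fun k => ?_
    have h1 : (e ^ k) '' V = ⇑(e ^ k).symm ⁻¹' V := (Equiv.image_eq_preimage_symm _ _)
    have h2 : (e ^ k).symm = e ^ (-k) := by
      rw [zpow_neg]; rfl
    rw [h1, h2]
    exact (Metric.isOpen_thickening).preimage (contZPow f (-k))
  · -- invariance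
    rw [image_iUnion]
    have key : ∀ k : ℤ, e '' ((e ^ k) '' V) = (e ^ (1 + k)) '' V := by
      intro k
      rw [image_image, zpow_add, zpow_one]
      rfl
    have hsurj : Function.Surjective (fun k : ℤ => 1 + k) := fun k => ⟨k - 1, by ring⟩
    calc ⋃ k : ℤ, e '' ((e ^ k) '' V) = ⋃ k : ℤ, (e ^ (1 + k)) '' V := by
          exact iUnion_congr key
      _ = ⋃ k : ℤ, (e ^ k) '' V := hsurj.iUnion_comp (fun k => (e ^ k) '' V)
  · -- contained in U
    refine iUnion_subset fun k => ?_
    rintro _ ⟨y, hy, rfl⟩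
    have hyU : y ∈ U := hVU hy
    exact hUsat y hyU (subset_closure ⟨k, rfl⟩)
  · -- path connectedness
    rintro ⟨hVpc, hLk⟩
    obtain ⟨x0, hx0⟩ := hL.1
    have hx0mem : x0 ∈ ⋃ k : ℤ, (e ^ k) '' V :=
      mem_iUnion.2 ⟨0, hLk 0 hx0⟩
    refine ⟨x0, hx0mem, ?_⟩
    intro y hy
    obtain ⟨k, hyk⟩ := mem_iUnion.1 hy
    have hpc : IsPathConnected ((e ^ k) '' V) := hVpc.image (contZPow f k)
    obtain ⟨z, hz, hz'⟩ := hpc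
    have j1 : JoinedIn ((e ^ k) '' V) z x0 := hz' (hLk k hx0)
    have j2 : JoinedIn ((e ^ k) '' V) z y := hz' hyk
    exact (j1.symm.trans j2).mono (subset_iUnion (fun k : ℤ => (e ^ k) '' V) k)
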